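/- arXiv:math/0502421 — 3 statements merged into one kernel-verified Lean document; each statement's English description precedes it below -/
import Mathlib

section
/- With λ > 1, p : ℕ → ℝ positive, and A m = (1 / p m) * ∑' k, p (m+k+1) / λ^(k+1) (series convergent), the price of a deferred annuity x m n = (1 / p m) * ∑' k, p (m + n + k) / λ^(n+k) satisfies, for n ≥ 1, x m n = (1 / λ^(n-1)) * (p (m+n-1) / p m) * A (m+n-1). -/
/-- Euler §15: deferred annuity reduces to an ordinary annuity. -/
theorem euler_deferred_annuity (l : ℝ) (hl : 1 < l)
    (p : ℕ → ℝ) (hp : ∀ m, 0 < p m) (hbd : ∃ C, ∀ m, p m ≤ C)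
    (hsum : ∀ m, Summable fun k : ℕ => p (m + k + 1) / l ^ (k + 1))
    (A : ℕ → ℝ)
    (hA : ∀ m, A m = (1 / p m) * ∑' k : ℕ, p (m + k + 1) / l ^ (k + 1))
    (x : ℕ → ℕ → ℝ)
    (hx : ∀ m n, x m n = (1 / p m) * ∑' k : ℕ, p (m + n + k) / l ^ (n + k)) :
    ∀ m n, 1 ≤ n →
      x m n = (1 / l ^ (n - 1)) * (p (m + n - 1) / p m) * A (m + n - 1) := by
  intro m n hn
  obtain ⟨n', rfl⟩ := Nat.exists_eq_add_of_le hn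
  have h1 : 1 + n' - 1 = n' := by omega
  have h2 : m + (1 + n') - 1 = m + n' := by omega
  rw [hx, hA, h1, h2]
  have hl0 : (0:ℝ) < l := lt_trans one_pos hl
  have key : ∑' k : ℕ, p (m + (1 + n') + k) / l ^ ((1 + n') + k)
      = (1 / l ^ n') * ∑' k : ℕ, p (m + n' + k + 1) / l ^ (k + 1) := by
    rw [← tsum_mul_left]
    apply tsum_congr
    intro k
    rw [show m + (1 + n') + k = m + n' + k + 1 by ring,
        show (1 + n') + k = n' + (k + 1) by ring, pow_add]
    field_simp
  rw [key]
  have hpm := (hp m).ne'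
  have hpmn := (hp (m + n')).ne'
  field_simp
end

section
/- Let λ > 1 and let p : ℕ → ℝ be positive with p m = 0 for m > N. Suppose the manager charges price x ≥ A m (with A m the fair value (1/p m) ∑_{k=0}^{N-m-1} p(m+k+1)/λ^(k+1)) to each of the p m annuitants. Define the fund F recursively by F 0 = p m * x and F (j+1) = λ * F j - p (m+j+1). Then F j ≥ 0 for all j ≤ N - m, i.e. the manager's fund never goes negative before all annuitants die. -/
/-- §8: the fair premium suffices — the fund never goes negative. -/
theorem euler_fund_nonneg (l : ℝ) (hl : 1 < l) (N m : ℕ) (hm : m ≤ N)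
    (p : ℕ → ℝ) (hp : ∀ k ≤ N, 0 < p k) (hp0 : ∀ k, N < k → p k = 0)
    (A : ℝ)
    (hA : A = (1 / p m) * ∑ k ∈ Finset.range (N - m), p (m + k + 1) / l ^ (k + 1))
    (x : ℝ) (hx : A ≤ x)
    (F : ℕ → ℝ) (hF0 : F 0 = p m * x)
    (hFs : ∀ j, F (j + 1) = l * F j - p (m + j + 1)) :
    ∀ j ≤ N - m, 0 ≤ F j := by
  have hl0 : (0:ℝ) < l := lt_trans one_pos hl
  have hpm : 0 < p m := hp m hm
  -- closed form for F
  have key : ∀ j, F j = l ^ j * (F 0 - ∑ i ∈ Finset.range j, p (m + i + 1) / l ^ (i + 1)) := by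
    intro j
    induction j with
    | zero => simp
    | succ j ih =>
      rw [hFs j, ih, Finset.sum_range_succ]
      have hlj : l ^ (j+1) ≠ 0 := pow_ne_zero _ (ne_of_gt hl0)
      field_simp
      ring
  -- F 0 is at least the full sum
  have hF0ge : ∑ i ∈ Finset.range (N - m), p (m + i + 1) / l ^ (i + 1) ≤ F 0 := by
    rw [hF0]
    have := mul_le_mul_of_nonneg_left hx (le_of_lt hpm)
    calc ∑ i ∈ Finset.range (N - m), p (m + i + 1) / l ^ (i + 1)
        = p m * A := by rw [hA]; field_simp
      _ ≤ p m * x := this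
  intro j hj
  rw [key j]
  apply mul_nonneg (pow_nonneg (le_of_lt hl0) j)
  have hsum : ∑ i ∈ Finset.range j, p (m + i + 1) / l ^ (i + 1)
      ≤ ∑ i ∈ Finset.range (N - m), p (m + i + 1) / l ^ (i + 1) := by
    apply Finset.sum_le_sum_of_subset_of_nonneg
    · exact Finset.range_subset_range.mpr hj
    · intro i hi _
      apply div_nonneg _ (le_of_lt (pow_pos hl0 _))
      rcases le_or_gt (m + i + 1) N with h | h
      · exact le_of_lt (hp _ h)
      · rw [hp0 _ h]
  linarith
end

section
/- Under the fund dynamics F 0 = p m * A m and F (j+1) = λ * F j - p (m+j+1), with A m the exact fair value, the fund is exactly exhausted at the end: F (N - m) = 0. -/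
/-- §8: the capital is entirely extinguished exactly when the annuitants are dead. -/
theorem euler_fund_exhausted (l : ℝ) (hl : 1 < l) (N m : ℕ) (hm : m ≤ N)
    (p : ℕ → ℝ) (hp : ∀ k ≤ N, 0 < p k) (hp0 : ∀ k, N < k → p k = 0)
    (A : ℝ)
    (hA : A = (1 / p m) * ∑ k ∈ Finset.range (N - m), p (m + k + 1) / l ^ (k + 1))
    (F : ℕ → ℝ) (hF0 : F 0 = p m * A)
    (hFs : ∀ j, F (j + 1) = l * F j - p (m + j + 1)) :
    F (N - m) = 0 := by
  have hl0 : l ≠ 0 := by linarith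
  have hpm : p m ≠ 0 := ne_of_gt (hp m hm)
  have key : ∀ j, F j = ∑ k ∈ Finset.range (N - m - j), p (m + j + k + 1) / l ^ (k + 1) := by
    intro j
    induction j with
    | zero =>
      rw [hF0, hA, Nat.sub_zero]
      field_simp
      simp
    | succ j ih =>
      rw [hFs j, ih]
      rcases lt_or_ge j (N - m) with h | h
      · have hn : N - m - j = (N - m - (j + 1)) + 1 := by omega
        rw [hn, Finset.sum_range_succ']
        rw [mul_add, Finset.mul_sum]
        have h0 : l * (p (m + j + 0 + 1) / l ^ (0 + 1)) = p (m + j + 1) := by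
          field_simp
          ring
        rw [h0, add_sub_cancel_right]
        apply Finset.sum_congr rfl
        intro k _
        have : m + j + (k + 1) + 1 = m + (j + 1) + k + 1 := by omega
        rw [this]
        field_simp
        ring
      · have h1 : N - m - j = 0 := by omega
        have h2 : N - m - (j + 1) = 0 := by omega
        rw [h1, h2]
        simp [hp0 (m + j + 1) (by omega)]
  rw [key (N - m), Nat.sub_self]
  simp
end
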